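/- Let N ≥ 1, let a_1, …, a_N ∈ ℝ be nonzero, let λ_1, …, λ_N ≥ 0 be pairwise distinct, and set f(t) = ∑_{j=1}^N a_j e^{−λ_j t} for t ≥ 0. Then for every T > 0, the set of admissible perturbations M_ad(f, T), i.e. the L²([0,T])-closure of the linear span of the translates f(· + z) for z ≥ 0, equals the N-dimensional linear subspace { ∑_{j=1}^N c_j e^{−λ_j ·} : c_1, …, c_N ∈ ℝ } of L²([0,T]). -/

import Mathlib

open MeasureTheory Filter Set

/-- `g` belongs to the set `M_ad(f, T)` of admissible perturbations of a scalar kernel `f`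
on `[0,T]`: the closure in `L²([0,T])` of finite linear combinations `∑_j a_j f(· + z_j)`
with shifts `z_j ≥ 0`. -/
def MemAdmissiblePerturbationsScalar (f : ℝ → ℝ) (T : ℝ) (g : ℝ → ℝ) : Prop :=
  ∀ ε : ℝ, 0 < ε → ∃ (n : ℕ) (a z : Fin n → ℝ),
    (∀ j, 0 ≤ z j) ∧
    (∫⁻ t in Set.Ioc (0 : ℝ) T,
        ENNReal.ofReal (((∑ j, a j * f (t + z j)) - g t) ^ 2)) <
      ENNReal.ofReal ε

private lemma ofReal_sq_eq' (x : ℝ) :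
    ENNReal.ofReal (x ^ 2) = (‖x‖₊ : ENNReal) ^ (2 : ℝ) := by
  rw [show x ^ 2 = ‖x‖ ^ 2 by rw [Real.norm_eq_abs, sq_abs],
    ENNReal.ofReal_pow (norm_nonneg x), ofReal_norm, enorm_eq_nnnorm,
    ← ENNReal.rpow_natCast]
  norm_num

private lemma coeFn_sum_smul_toLp' {μ : Measure ℝ} {ι : Type*} (s : Finset ι)
    (c : ι → ℝ) (e : ι → ℝ → ℝ) (hmem : ∀ j, MemLp (e j) 2 μ) :
    ((∑ j ∈ s, c j • (hmem j).toLp (e j) : Lp ℝ 2 μ) : ℝ → ℝ)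
      =ᵐ[μ] fun t => ∑ j ∈ s, c j * e j t := by
  classical
  induction s using Finset.induction with
  | empty =>
      simp only [Finset.sum_empty]
      exact Lp.coeFn_zero ℝ 2 μ
  | @insert k s1 hj ih =>
      rw [Finset.sum_insert hj]
      filter_upwards [Lp.coeFn_add (c k • (hmem k).toLp (e k))
          (∑ j ∈ s1, c j • (hmem j).toLp (e j)),
        Lp.coeFn_smul (c k) ((hmem k).toLp (e k)),
        (hmem k).coeFn_toLp, ih] with t h1 h2 h3 h4
      simp only [Finset.sum_insert hj, h1, Pi.add_apply, h2, Pi.smul_apply, h3, h4,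
        smul_eq_mul]

/-- for `f(t) = ∑_{j=1}^N a_j e^{−λ_j t}` with nonzero coefficients and
pairwise distinct `λ_j ≥ 0`, the set of admissible perturbations `M_ad(f, T)` is exactly
the `N`-dimensional subspace `{ ∑ c_j e^{−λ_j ·} }` of `L²([0,T])`. -/
theorem stmt6 (N : ℕ) (a lam : Fin (N + 1) → ℝ)
    (ha : ∀ j, a j ≠ 0) (hlam : ∀ j, 0 ≤ lam j) (hdist : Function.Injective lam)
    (T : ℝ) (hT : 0 < T) (g : ℝ → ℝ) (hg : Measurable g)
    (hgL2 : IntegrableOn (fun t => (g t) ^ 2) (Ioc 0 T)) :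
    MemAdmissiblePerturbationsScalar
        (fun t => ∑ j, a j * Real.exp (-(lam j) * t)) T g ↔
      ∃ c : Fin (N + 1) → ℝ, ∀ᵐ t ∂(volume.restrict (Ioc (0 : ℝ) T)),
        g t = ∑ j, c j * Real.exp (-(lam j) * t) := by
  classical
  set μ : Measure ℝ := volume.restrict (Ioc (0 : ℝ) T) with hμ
  haveI hfin : IsFiniteMeasure μ := by
    constructor
    rw [hμ, Measure.restrict_apply_univ, Real.volume_Ioc]
    exact ENNReal.ofReal_lt_top
  set e : Fin (N + 1) → ℝ → ℝ := fun j t => Real.exp (-(lam j) * t) with he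
  have hemem : ∀ j, MemLp (e j) 2 μ := by
    intro j
    refine MemLp.of_bound
      ((Real.continuous_exp.comp (continuous_const.mul continuous_id)).aestronglyMeasurable) 1 ?_
    rw [hμ]
    filter_upwards [ae_restrict_mem measurableSet_Ioc] with t ht
    rw [he]
    simp only [Real.norm_eq_abs, abs_of_pos (Real.exp_pos _)]
    rw [Real.exp_le_one_iff]
    have := mul_nonneg (hlam j) ht.1.le
    nlinarith
  have hgmem : MemLp g 2 μ :=
    (memLp_two_iff_integrable_sq hg.aestronglyMeasurable).mpr hgL2
  constructor
  · -- forward direction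
    intro H
    set V : Submodule ℝ (Lp ℝ 2 μ) :=
      Submodule.span ℝ (Set.range fun j => (hemem j).toLp (e j)) with hV
    haveI hVfd : FiniteDimensional ℝ V :=
      FiniteDimensional.span_of_finite ℝ (Set.finite_range _)
    have hVclosed : IsClosed (V : Set (Lp ℝ 2 μ)) := V.closed_of_finiteDimensional
    have hmemV : hgmem.toLp g ∈ V := by
      have hcl : hgmem.toLp g ∈ closure (V : Set (Lp ℝ 2 μ)) := by
        rw [Metric.mem_closure_iff]
        intro ε hε
        obtain ⟨n, b, z, hz, hlt⟩ := H (ε ^ 2) (by positivity)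
        set B : Fin (N + 1) → ℝ :=
          fun k => ∑ j, b j * (a k * Real.exp (-(lam k) * z j)) with hB
        set w : ℝ → ℝ := fun t => ∑ k, B k * e k t with hw
        have hcombo : ∀ t : ℝ,
            (∑ j, b j * (∑ k, a k * Real.exp (-(lam k) * (t + z j)))) = w t := by
          intro t
          simp only [hw, hB, he, Finset.sum_mul, Finset.mul_sum]
          rw [Finset.sum_comm]
          refine Finset.sum_congr rfl fun j _ => Finset.sum_congr rfl fun k _ => ?_
          rw [mul_add, Real.exp_add]
          ring
        set v : Lp ℝ 2 μ := ∑ k, B k • (hemem k).toLp (e k) with hv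
        have hvV : v ∈ V := by
          refine Submodule.sum_mem _ fun k _ => Submodule.smul_mem _ _ ?_
          exact Submodule.subset_span ⟨k, rfl⟩
        have hvw : (v : ℝ → ℝ) =ᵐ[μ] w :=
          coeFn_sum_smul_toLp' Finset.univ B e hemem
        have hlt' : (∫⁻ t, ENNReal.ofReal ((g t - w t) ^ 2) ∂μ) < ENNReal.ofReal (ε ^ 2) := by
          refine lt_of_eq_of_lt ?_ hlt
          refine (lintegral_congr fun t => ?_).symm
          congr 1
          rw [hcombo t]
          ring
        have h2 : eLpNorm (fun t => g t - w t) 2 μ < ENNReal.ofReal ε := by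
          have hform : eLpNorm (fun t => g t - w t) 2 μ
              = (∫⁻ t, ENNReal.ofReal ((g t - w t) ^ 2) ∂μ) ^ (1 / 2 : ℝ) := by
            rw [eLpNorm_eq_lintegral_rpow_enorm two_ne_zero ENNReal.ofNat_ne_top]
            simp only [ENNReal.toReal_ofNat]
            congr 1
            exact lintegral_congr fun t => (ofReal_sq_eq' _).symm
          rw [hform]
          calc (∫⁻ t, ENNReal.ofReal ((g t - w t) ^ 2) ∂μ) ^ (1 / 2 : ℝ)
              < (ENNReal.ofReal (ε ^ 2)) ^ (1 / 2 : ℝ) :=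
                ENNReal.rpow_lt_rpow hlt' (by norm_num)
            _ = ENNReal.ofReal ε := by
                rw [show (ε ^ 2 : ℝ) = ε ^ (2 : ℕ) from rfl,
                  ENNReal.ofReal_pow hε.le, ← ENNReal.rpow_natCast,
                  ← ENNReal.rpow_mul]
                norm_num
        refine ⟨v, hvV, ?_⟩
        rw [Lp.dist_def]
        have hcongr : (⇑(hgmem.toLp g) - ⇑v) =ᵐ[μ] fun t => g t - w t := by
          filter_upwards [hgmem.coeFn_toLp, hvw] with t h1 h2
          simp [h1, h2]
        rw [eLpNorm_congr_ae hcongr]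
        exact ENNReal.toReal_lt_of_lt_ofReal h2
      rwa [hVclosed.closure_eq] at hcl
    obtain ⟨c, hc⟩ := (Submodule.mem_span_range_iff_exists_fun ℝ).mp hmemV
    refine ⟨c, ?_⟩
    have h2 := coeFn_sum_smul_toLp' Finset.univ c e hemem
    rw [hc] at h2
    filter_upwards [hgmem.coeFn_toLp, h2] with t h1 h3
    rw [← h1, h3]
  · -- backward direction
    rintro ⟨c, hc⟩ ε hε
    set x : Fin (N + 1) → ℝ := fun k => Real.exp (-lam k) with hx
    have hxinj : Function.Injective x := by
      intro k l h
      exact hdist (neg_injective (Real.exp_eq_exp.mp h))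
    have hdet : (Matrix.vandermonde x).det ≠ 0 :=
      Matrix.det_vandermonde_ne_zero_iff.mpr hxinj
    set d : Fin (N + 1) → ℝ := fun k => c k / a k with hd
    set b : Fin (N + 1) → ℝ := Matrix.mulVec (Matrix.vandermonde x)⁻¹ d with hb
    have hAb : Matrix.mulVec (Matrix.vandermonde x) b = d := by
      rw [hb, Matrix.mulVec_mulVec,
        Matrix.mul_nonsing_inv _ (isUnit_iff_ne_zero.mpr hdet), Matrix.one_mulVec]
    refine ⟨N + 1, b, fun j => ((j : ℕ) : ℝ), fun j => Nat.cast_nonneg _, ?_⟩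
    have hpt : ∀ t : ℝ,
        (∑ j, b j * (∑ k, a k * Real.exp (-(lam k) * (t + ((j : ℕ) : ℝ)))))
          = ∑ k, c k * Real.exp (-(lam k) * t) := by
      intro t
      simp only [Finset.mul_sum]
      rw [Finset.sum_comm]
      refine Finset.sum_congr rfl fun k _ => ?_
      have h1 : ∑ j : Fin (N + 1), x k ^ (j : ℕ) * b j = c k / a k := by
        have := congrFun hAb k
        simpa [Matrix.mulVec, Matrix.vandermonde, dotProduct, hd] using this
      calc ∑ j, b j * (a k * Real.exp (-(lam k) * (t + ((j : ℕ) : ℝ))))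
          = (a k * Real.exp (-(lam k) * t)) * ∑ j : Fin (N + 1), x k ^ (j : ℕ) * b j := by
            rw [Finset.mul_sum]
            refine Finset.sum_congr rfl fun j _ => ?_
            rw [hx, mul_add, Real.exp_add, mul_comm (-(lam k)) (((j : ℕ) : ℝ)),
              Real.exp_nat_mul]
            ring
        _ = c k * Real.exp (-(lam k) * t) := by
            rw [h1, div_eq_mul_inv,
              show a k * Real.exp (-lam k * t) * (c k * (a k)⁻¹)
                = a k * (a k)⁻¹ * (c k * Real.exp (-lam k * t)) by ring,
              mul_inv_cancel₀ (ha k), one_mul]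
    have hzero : (fun t => ENNReal.ofReal
        (((∑ j : Fin (N + 1), b j *
            ((fun t => ∑ k, a k * Real.exp (-(lam k) * t)) (t + ((j : ℕ) : ℝ)))) - g t) ^ 2))
        =ᵐ[μ] 0 := by
      filter_upwards [hc] with t ht
      simp only [hpt t, ht, sub_self]
      simp
    calc (∫⁻ t in Set.Ioc (0 : ℝ) T, ENNReal.ofReal
            (((∑ j : Fin (N + 1), b j *
              ((fun t => ∑ k, a k * Real.exp (-(lam k) * t)) (t + ((j : ℕ) : ℝ)))) - g t) ^ 2))
        = ∫⁻ _, (0 : ENNReal) ∂μ := lintegral_congr_ae hzero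
      _ = 0 := lintegral_zero
      _ < ENNReal.ofReal ε := ENNReal.ofReal_pos.mpr hε
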